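/- Let n ≥ 2 and 1 ≤ k ≤ n-1. The map sending a flag 0 = V_0 ⊊ V_1 ⊊ ⋯ ⊊ V_k = V of length k in V to the set T = {A ∈ Q_n : A·V_i ⊆ V_{i-1} for all i = 1,…,k} is a bijection from the set of flags of length k in V onto the set of maximal elements of Nil_k(Q_n). -/

import Mathlib

namespace NilSg

variable {M : Type*}

/-- `T ⊆ M` is closed under multiplication. -/
def IsSubsg [Mul M] (T : Set M) : Prop :=
  ∀ ⦃a⦄, a ∈ T → ∀ ⦃b⦄, b ∈ T → a * b ∈ T

/-- Every product of exactly `k` elements of `T` equals `z`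
(such products are the products of nonempty lists `a :: l` of elements of `T`). -/
def ProdEq [Mul M] (z : M) (T : Set M) (k : ℕ) : Prop :=
  ∀ (a : M) (l : List M), a ∈ T → (∀ x ∈ l, x ∈ T) → l.length + 1 = k →
    l.foldl (· * ·) a = z

/-- `T` is a nilpotent subsemigroup with respect to the zero element `z`. -/
def IsNilSubsg [Mul M] (z : M) (T : Set M) : Prop :=
  IsSubsg T ∧ ∃ k, 0 < k ∧ ProdEq z T k

/-- The nilpotency class of `T`: the minimal `k ≥ 1` such that every product of `k`
elements of `T` equals `z`. -/
noncomputable def nilClass [Mul M] (z : M) (T : Set M) : ℕ :=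
  sInf {k | 0 < k ∧ ProdEq z T k}

/-- `T` is a nilpotent subsemigroup of `S` (with zero `z`). -/
def NilIn [Mul M] (z : M) (S : Set M) (T : Set M) : Prop :=
  T ⊆ S ∧ IsNilSubsg z T

/-- `T` is a nilpotent subsemigroup of `S` (with zero `z`) of nilpotency class at most `k`. -/
def NilLe [Mul M] (z : M) (S : Set M) (k : ℕ) (T : Set M) : Prop :=
  T ⊆ S ∧ IsNilSubsg z T ∧ nilClass z T ≤ k

/-- `Ω n`: the semigroup of `n × n` real matrices with nonnegative entries. -/
def Omega (n : ℕ) : Set (Matrix (Fin n) (Fin n) ℝ) :=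
  {A | ∀ i j, 0 ≤ A i j}

/-- `Q n`: the semigroup of `n × n` real matrices all of whose row sums and
column sums equal `1`. -/
def Qset (n : ℕ) : Set (Matrix (Fin n) (Fin n) ℝ) :=
  {A | (∀ i, ∑ j, A i j = 1) ∧ (∀ j, ∑ i, A i j = 1)}

/-- `D n`: the semigroup of `n × n` doubly stochastic real matrices. -/
def Dset (n : ℕ) : Set (Matrix (Fin n) (Fin n) ℝ) :=
  {A | (∀ i j, 0 ≤ A i j) ∧ (∀ i, ∑ j, A i j = 1) ∧ (∀ j, ∑ i, A i j = 1)}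

/-- The matrix all of whose entries equal `1/n`: the zero element of `Q n` and `D n`. -/
noncomputable def On (n : ℕ) : Matrix (Fin n) (Fin n) ℝ :=
  Matrix.of fun _ _ => (n : ℝ)⁻¹

/-- The hyperplane `V` of all vectors whose coordinates sum to `0`. -/
def Vsub (n : ℕ) : Submodule ℝ (Fin n → ℝ) where
  carrier := {x | ∑ i, x i = 0}
  add_mem' := by
    intro a b ha hb
    simp only [Set.mem_setOf_eq, Pi.add_apply] at *
    simp [Finset.sum_add_distrib, ha, hb]
  zero_mem' := by simp
  smul_mem' := by
    intro c x hx
    simp only [Set.mem_setOf_eq, Pi.smul_apply, smul_eq_mul] at *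
    simp [← Finset.mul_sum, hx]

open Matrix

variable {n : ℕ}

lemma mem_Vsub {x : Fin n → ℝ} : x ∈ Vsub n ↔ ∑ i, x i = 0 := Iff.rfl

lemma qset_mul {A B : Matrix (Fin n) (Fin n) ℝ} (hA : A ∈ Qset n) (hB : B ∈ Qset n) :
    A * B ∈ Qset n := by
  constructor
  · intro i
    simp only [mul_apply]
    rw [Finset.sum_comm]
    calc ∑ l, ∑ j, A i l * B l j = ∑ l, A i l * ∑ j, B l j := by
          simp [Finset.mul_sum]
      _ = 1 := by simp [hB.1, hA.1 i]
  · intro j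
    simp only [mul_apply]
    calc ∑ i, ∑ l, A i l * B l j = ∑ l, (∑ i, A i l) * B l j := by
          rw [Finset.sum_comm]; simp [Finset.sum_mul]
      _ = 1 := by simp [hA.2, hB.2 j]

lemma qset_mulVec_ones {A : Matrix (Fin n) (Fin n) ℝ} (hA : A ∈ Qset n) :
    A.mulVec (fun _ => (1:ℝ)) = fun _ => (1:ℝ) := by
  ext i
  simp [mulVec, dotProduct, hA.1 i]

lemma qset_mulVec_vsub {A : Matrix (Fin n) (Fin n) ℝ} (hA : A ∈ Qset n)
    {x : Fin n → ℝ} (hx : x ∈ Vsub n) : A.mulVec x ∈ Vsub n := by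
  rw [mem_Vsub] at *
  simp only [mulVec, dotProduct]
  rw [Finset.sum_comm]
  calc ∑ j, ∑ i, A i j * x j = ∑ j, (∑ i, A i j) * x j := by simp [Finset.sum_mul]
    _ = 0 := by simp [hA.2, hx]

lemma On_mem_Qset (hn : 0 < n) : On n ∈ Qset n := by
  have hn' : (n:ℝ) ≠ 0 := Nat.cast_ne_zero.2 hn.ne'
  constructor <;> intro i <;> simp [On, Finset.sum_const, mul_inv_cancel₀ hn']

lemma On_mulVec_vsub {x : Fin n → ℝ} (hx : x ∈ Vsub n) : (On n).mulVec x = 0 := by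
  ext i
  rw [mem_Vsub] at hx
  simp [On, mulVec, dotProduct, ← Finset.mul_sum, hx]

lemma qset_mul_On {A : Matrix (Fin n) (Fin n) ℝ} (hA : A ∈ Qset n) : A * On n = On n := by
  ext i j
  simp [mul_apply, On, ← Finset.sum_mul, hA.1 i]

lemma single_sub_mem_Vsub (hn : 0 < n) (j : Fin n) :
    (Pi.single j 1 - (n:ℝ)⁻¹ • fun _ => (1:ℝ)) ∈ Vsub n := by
  have hn' : (n:ℝ) ≠ 0 := Nat.cast_ne_zero.2 hn.ne'
  rw [mem_Vsub]
  simp [Finset.sum_sub_distrib, Finset.sum_const, mul_inv_cancel₀ hn',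
    Pi.single_apply, Finset.sum_ite_eq']

lemma eq_On_of_kills_Vsub (hn : 0 < n) {M : Matrix (Fin n) (Fin n) ℝ} (hM : M ∈ Qset n)
    (h : ∀ x ∈ Vsub n, M.mulVec x = 0) : M = On n := by
  ext i j
  have h1 := h _ (single_sub_mem_Vsub hn j)
  have := congrFun h1 i
  rw [mulVec_sub, mulVec_smul, qset_mulVec_ones hM] at this
  simp only [Pi.sub_apply, Pi.smul_apply, mulVec_single, Pi.zero_apply, smul_eq_mul,
    mul_one] at this
  have : M i j = (n:ℝ)⁻¹ := by simp at this; linarith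
  simpa [On] using this

section Semi
variable {M : Type*} [Semigroup M]

/-- Products of exactly `j` elements of `T`. -/
def pS (T : Set M) : ℕ → Set M
  | 0 => ∅
  | 1 => T
  | (j+2) => {m | ∃ a ∈ pS T (j+1), ∃ t ∈ T, m = a * t}

lemma pS_one (T : Set M) : pS T 1 = T := rfl

lemma mem_pS_succ {T : Set M} {j : ℕ} (hj : 1 ≤ j) {m : M} :
    m ∈ pS T (j+1) ↔ ∃ a ∈ pS T j, ∃ t ∈ T, m = a * t := by
  cases j with
  | zero => omega
  | succ j => rfl

lemma pS_mul {T : Set M} {i j : ℕ} (hi : 1 ≤ i) (hj : 1 ≤ j) {a b : M}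
    (ha : a ∈ pS T i) (hb : b ∈ pS T j) : a * b ∈ pS T (i + j) := by
  induction j generalizing b with
  | zero => omega
  | succ j ih =>
    rcases Nat.eq_zero_or_pos j with h1 | hj'
    · subst h1
      exact (mem_pS_succ hi).2 ⟨a, ha, b, hb, rfl⟩
    · obtain ⟨c, hc, t, ht, rfl⟩ := (mem_pS_succ hj').1 hb
      have h2 : a * c ∈ pS T (i + j) := ih hj' hc
      have h3 := (mem_pS_succ (by omega : 1 ≤ i + j)).2 ⟨a * c, h2, t, ht, rfl⟩
      rw [mul_assoc] at h3
      exact h3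

lemma pS_split {T : Set M} {i j : ℕ} (hi : 1 ≤ i) (hj : 1 ≤ j) {m : M}
    (hm : m ∈ pS T (i + j)) : ∃ a ∈ pS T i, ∃ b ∈ pS T j, m = a * b := by
  induction j generalizing m with
  | zero => omega
  | succ j ih =>
    rcases Nat.eq_zero_or_pos j with h1 | hj'
    · subst h1
      obtain ⟨a, ha, t, ht, rfl⟩ := (mem_pS_succ hi).1 hm
      exact ⟨a, ha, t, ht, rfl⟩
    · obtain ⟨c, hc, t, ht, rfl⟩ := (mem_pS_succ (by omega : 1 ≤ i + j)).1 hm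
      obtain ⟨a, ha, b, hb, rfl⟩ := ih hj' hc
      exact ⟨a, ha, b * t, pS_mul hj' le_rfl hb ht, mul_assoc a b t⟩

lemma pS_subset_of_isSubsg {T : Set M} (hT : IsSubsg T) {j : ℕ} (hj : 1 ≤ j) :
    pS T j ⊆ T := by
  induction j with
  | zero => omega
  | succ j ih =>
    rcases Nat.eq_or_lt_of_le hj with h1 | h1
    · rw [← h1, pS_one]
    · intro m hm
      obtain ⟨a, ha, t, ht, rfl⟩ := (mem_pS_succ (by omega : 1 ≤ j)).1 hm
      exact hT (ih (by omega) ha) ht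

lemma pS_mono {T T' : Set M} (h : T ⊆ T') (j : ℕ) : pS T j ⊆ pS T' j := by
  induction j with
  | zero => exact subset_rfl
  | succ j ih =>
    rcases Nat.eq_or_lt_of_le (Nat.zero_le j) with h1 | h1
    · simp only [← h1, pS_one]; exact h
    · intro m hm
      obtain ⟨a, ha, t, ht, rfl⟩ := (mem_pS_succ h1).1 hm
      exact (mem_pS_succ h1).2 ⟨a, ih ha, t, h ht, rfl⟩

lemma foldl_mem_pS {T : Set M} {a : M} {l : List M} (ha : a ∈ T) (hl : ∀ x ∈ l, x ∈ T) :
    l.foldl (· * ·) a ∈ pS T (l.length + 1) := by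
  induction l using List.reverseRecOn with
  | nil => exact ha
  | append_singleton l x ih =>
    rw [List.foldl_append]
    have hx : x ∈ T := hl x (by simp)
    have h1 : l.foldl (· * ·) a ∈ pS T (l.length + 1) :=
      ih (fun y hy => hl y (by simp [hy]))
    have := pS_mul (by omega) le_rfl h1 (show x ∈ pS T 1 from hx)
    simpa [List.length_append] using this

lemma mem_pS_exists {T : Set M} {j : ℕ} (hj : 1 ≤ j) {m : M} (hm : m ∈ pS T j) :
    ∃ (a : M) (l : List M), a ∈ T ∧ (∀ x ∈ l, x ∈ T) ∧ l.length + 1 = j ∧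
      l.foldl (· * ·) a = m := by
  induction j generalizing m with
  | zero => omega
  | succ j ih =>
    rcases Nat.eq_or_lt_of_le hj with h1 | h1
    · have hm' : m ∈ T := by rw [← pS_one T, h1]; exact hm
      exact ⟨m, [], hm', by simp, by simpa using h1, rfl⟩
    · obtain ⟨a, ha, t, ht, rfl⟩ := (mem_pS_succ (by omega : 1 ≤ j)).1 hm
      obtain ⟨b, l, hb, hl, hlen, hfold⟩ := ih (by omega) ha
      refine ⟨b, l ++ [t], hb, ?_, by simp; omega, ?_⟩
      · intro x hx
        rcases List.mem_append.1 hx with h | h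
        · exact hl x h
        · simp at h; subst h; exact ht
      · rw [List.foldl_append, hfold]
        rfl

lemma prodEq_iff_pS {T : Set M} {z : M} {j : ℕ} (hj : 1 ≤ j) :
    ProdEq z T j ↔ ∀ m ∈ pS T j, m = z := by
  constructor
  · intro h m hm
    obtain ⟨a, l, ha, hl, hlen, hfold⟩ := mem_pS_exists hj hm
    rw [← hfold]; exact h a l ha hl hlen
  · intro h a l ha hl hlen
    exact h _ (by rw [← hlen]; exact foldl_mem_pS ha hl)

end Semi
section Kchain

open Matrix

variable {n : ℕ}

/-- The kernel chain of a set `T` of matrices. -/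
noncomputable def Kc (n : ℕ) (T : Set (Matrix (Fin n) (Fin n) ℝ)) :
    ℕ → Submodule ℝ (Fin n → ℝ)
  | 0 => ⊥
  | (j+1) =>
    { carrier := {x | x ∈ Vsub n ∧ ∀ P ∈ pS T (j+1), P.mulVec x = 0}
      add_mem' := by
        intro a b ha hb
        exact ⟨(Vsub n).add_mem ha.1 hb.1, fun P hP => by
          rw [mulVec_add, ha.2 P hP, hb.2 P hP, add_zero]⟩
      zero_mem' := ⟨(Vsub n).zero_mem, fun P hP => by rw [mulVec_zero]⟩
      smul_mem' := by
        intro c x hx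
        exact ⟨(Vsub n).smul_mem c hx.1, fun P hP => by
          rw [mulVec_smul, hx.2 P hP, smul_zero]⟩ }

variable {T : Set (Matrix (Fin n) (Fin n) ℝ)}

lemma mem_Kc_succ {j : ℕ} {x : Fin n → ℝ} :
    x ∈ Kc n T (j+1) ↔ x ∈ Vsub n ∧ ∀ P ∈ pS T (j+1), P.mulVec x = 0 := Iff.rfl

lemma Kc_le_Vsub (j : ℕ) : Kc n T j ≤ Vsub n := by
  cases j with
  | zero => exact bot_le
  | succ j => exact fun x hx => hx.1

lemma Kc_mono_step (j : ℕ) : Kc n T j ≤ Kc n T (j+1) := by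
  cases j with
  | zero => exact bot_le
  | succ j =>
    intro x hx
    refine ⟨hx.1, fun P hP => ?_⟩
    have : P ∈ pS T (1 + (j+1)) := by rw [add_comm]; exact hP
    obtain ⟨a, ha, b, hb, rfl⟩ := pS_split le_rfl (by omega) this
    rw [← mulVec_mulVec, hx.2 b hb, mulVec_zero]

lemma Kc_mono : Monotone (Kc n T) := monotone_nat_of_le_succ Kc_mono_step

lemma Kc_maps (hTQ : T ⊆ Qset n) {A : Matrix (Fin n) (Fin n) ℝ} (hA : A ∈ T)
    {j : ℕ} {x : Fin n → ℝ} (hx : x ∈ Kc n T (j+1)) : A.mulVec x ∈ Kc n T j := by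
  cases j with
  | zero =>
    have := hx.2 A (show A ∈ pS T 1 from hA)
    simp [this, Submodule.mem_bot]
  | succ j =>
    refine ⟨qset_mulVec_vsub (hTQ hA) hx.1, fun Q hQ => ?_⟩
    rw [mulVec_mulVec]
    exact hx.2 _ (pS_mul (by omega) le_rfl hQ (show A ∈ pS T 1 from hA))

lemma Kc_top {k : ℕ} (hk : 1 ≤ k) (h : ProdEq (On n) T k) : Kc n T k = Vsub n := by
  refine le_antisymm (Kc_le_Vsub k) ?_
  cases k with
  | zero => omega
  | succ k =>
    intro x hx
    refine ⟨hx, fun P hP => ?_⟩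
    have hP' : P = On n := (prodEq_iff_pS (by omega)).1 h P hP
    rw [hP', On_mulVec_vsub hx]

lemma Kc_antitone {T' : Set (Matrix (Fin n) (Fin n) ℝ)} (h : T ⊆ T') (j : ℕ) :
    Kc n T' j ≤ Kc n T j := by
  cases j with
  | zero => exact le_rfl
  | succ j => exact fun x hx => ⟨hx.1, fun P hP => hx.2 P (pS_mono h _ hP)⟩

/-- If all images of `x` under `T` lie in `Kc j`, then `x ∈ Kc (j+1)`. -/
lemma mem_Kc_succ_of_maps (hTQ : T ⊆ Qset n) {j : ℕ} {x : Fin n → ℝ} (hx : x ∈ Vsub n)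
    (h : ∀ A ∈ T, A.mulVec x ∈ Kc n T j) : x ∈ Kc n T (j+1) := by
  refine ⟨hx, fun P hP => ?_⟩
  cases j with
  | zero =>
    have := h P hP
    simpa [Kc, Submodule.mem_bot] using this
  | succ j =>
    have hP' : P ∈ pS T ((j+1) + 1) := hP
    obtain ⟨a, ha, t, ht, rfl⟩ := (mem_pS_succ (by omega)).1 hP'
    rw [← mulVec_mulVec]
    exact (h t ht).2 a ha

lemma Kc_stab (hTQ : T ⊆ Qset n) {j : ℕ} (h : Kc n T j = Kc n T (j+1)) :
    Kc n T (j+1) = Kc n T (j+2) := by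
  refine le_antisymm (Kc_mono_step _) ?_
  intro x hx
  refine mem_Kc_succ_of_maps hTQ (Kc_le_Vsub _ hx) (fun A hA => ?_)
  rw [h]
  exact Kc_maps hTQ hA hx

lemma Kc_stab' (hTQ : T ⊆ Qset n) {j : ℕ} (h : Kc n T j = Kc n T (j+1)) :
    ∀ d, Kc n T (j+d) = Kc n T j ∧ Kc n T (j+d) = Kc n T (j+d+1) := by
  intro d
  induction d with
  | zero => exact ⟨rfl, h⟩
  | succ d ih =>
    refine ⟨ih.2.symm.trans ih.1, ?_⟩
    exact Kc_stab hTQ ih.2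

end Kchain

section Flag

open Matrix

variable {n k : ℕ}

/-- Flag hypotheses. -/
structure IsFlag (n k : ℕ) (V : Fin (k + 1) → Submodule ℝ (Fin n → ℝ)) : Prop where
  bot : V 0 = ⊥
  top : V (Fin.last k) = Vsub n
  mono : StrictMono V

/-- ℕ-indexed version of a flag, clamped at `k`. -/
def vnat (k : ℕ) (V : Fin (k + 1) → Submodule ℝ (Fin n → ℝ)) : ℕ → Submodule ℝ (Fin n → ℝ) :=
  fun j => V ⟨min j k, by omega⟩

variable {V : Fin (k + 1) → Submodule ℝ (Fin n → ℝ)}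

lemma vnat_of_le {j : ℕ} (hj : j ≤ k) : vnat k V j = V ⟨j, by omega⟩ := by
  simp [vnat, Nat.min_eq_left hj]

lemma vnat_zero (hV : IsFlag n k V) : vnat k V 0 = ⊥ := by
  rw [vnat_of_le (Nat.zero_le k)]
  convert hV.bot using 2
  exact Fin.ext (by simp)

lemma vnat_top {j : ℕ} (hV : IsFlag n k V) (hj : k ≤ j) : vnat k V j = Vsub n := by
  have : min j k = k := Nat.min_eq_right hj
  simp only [vnat, this]
  exact hV.top

lemma vnat_mono (hV : IsFlag n k V) : Monotone (vnat k V) := by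
  intro a b hab
  exact hV.mono.monotone (Fin.mk_le_mk.2 (min_le_min hab (le_refl k)))

lemma vnat_lt (hV : IsFlag n k V) {a b : ℕ} (hab : a < b) (hb : b ≤ k) :
    vnat k V a < vnat k V b := by
  exact hV.mono (Fin.mk_lt_mk.2 (by omega))

lemma vnat_le_Vsub (hV : IsFlag n k V) (j : ℕ) : vnat k V j ≤ Vsub n := by
  rcases le_total j k with h | h
  · rw [← vnat_top hV (le_refl k)]
    exact vnat_mono hV h
  · rw [vnat_top hV h]

/-- The candidate maximal nilpotent subsemigroup attached to a flag. -/
def NN (n k : ℕ) (V : Fin (k + 1) → Submodule ℝ (Fin n → ℝ)) :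
    Set (Matrix (Fin n) (Fin n) ℝ) :=
  {A | A ∈ Qset n ∧ ∀ i : Fin k, ∀ x ∈ V i.succ, A.mulVec x ∈ V i.castSucc}

lemma mem_NN_iff (hV : IsFlag n k V) {A : Matrix (Fin n) (Fin n) ℝ} :
    A ∈ NN n k V ↔ A ∈ Qset n ∧
      ∀ j : ℕ, ∀ x ∈ vnat k V (j+1), A.mulVec x ∈ vnat k V j := by
  constructor
  · rintro ⟨hQ, h⟩
    refine ⟨hQ, fun j x hx => ?_⟩
    by_cases hj : j < k
    · have e1 : vnat k V (j+1) = V (⟨j, hj⟩ : Fin k).succ := by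
        rw [vnat_of_le (by omega)]; rfl
      have e2 : vnat k V j = V (⟨j, hj⟩ : Fin k).castSucc := by
        rw [vnat_of_le (by omega)]; rfl
      rw [e1] at hx; rw [e2]
      exact h _ x hx
    · rw [vnat_top hV (by omega)] at hx
      rw [vnat_top hV (by omega)]
      exact qset_mulVec_vsub hQ hx
  · rintro ⟨hQ, h⟩
    refine ⟨hQ, fun i x hx => ?_⟩
    have e1 : V i.succ = vnat k V (i.val + 1) := by
      rw [vnat_of_le (by omega)]
      congr 1
    have e2 : V i.castSucc = vnat k V i.val := by
      rw [vnat_of_le (by omega)]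
      congr 1
    rw [e1] at hx; rw [e2]
    exact h _ x hx

lemma NN_subset_Qset : NN n k V ⊆ Qset n := fun _ hA => hA.1

lemma On_mem_NN (hn : 0 < n) (hV : IsFlag n k V) : On n ∈ NN n k V := by
  refine ⟨On_mem_Qset hn, fun i x hx => ?_⟩
  have hxV : x ∈ Vsub n := by
    have : V i.succ ≤ V (Fin.last k) := hV.mono.monotone (Fin.le_last _)
    rw [hV.top] at this
    exact this hx
  rw [On_mulVec_vsub hxV]
  exact Submodule.zero_mem _

lemma NN_isSubsg (hV : IsFlag n k V) : IsSubsg (NN n k V) := by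
  intro A hA B hB
  rw [mem_NN_iff hV] at hA hB ⊢
  refine ⟨qset_mul hA.1 hB.1, fun j x hx => ?_⟩
  rw [← mulVec_mulVec]
  have hBx := hB.2 j x hx
  cases j with
  | zero =>
    rw [vnat_zero hV] at hBx ⊢
    simp only [Submodule.mem_bot] at hBx
    rw [hBx, mulVec_zero]
    exact Submodule.zero_mem _
  | succ j =>
    exact vnat_mono hV (by omega) (hA.2 j _ hBx)

lemma NN_pS_maps (hV : IsFlag n k V) {d : ℕ} (hd : 1 ≤ d)
    {P : Matrix (Fin n) (Fin n) ℝ} (hP : P ∈ pS (NN n k V) d)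
    {j : ℕ} {x : Fin n → ℝ} (hx : x ∈ vnat k V j) :
    P.mulVec x ∈ vnat k V (j - d) := by
  induction d generalizing P j x with
  | zero => omega
  | succ d ih =>
    rcases Nat.eq_zero_or_pos d with h1 | h1
    · subst h1
      have hP' : P ∈ NN n k V := hP
      rw [mem_NN_iff hV] at hP'
      cases j with
      | zero =>
        rw [vnat_zero hV] at hx
        simp only [Submodule.mem_bot] at hx
        rw [hx, mulVec_zero]
        exact Submodule.zero_mem _
      | succ j => exact hP'.2 j x hx
    · obtain ⟨a, ha, t, ht, rfl⟩ := (mem_pS_succ h1).1 hP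
      rw [← mulVec_mulVec]
      have ht' := ht
      rw [mem_NN_iff hV] at ht'
      have htx : t.mulVec x ∈ vnat k V (j - 1) := by
        cases j with
        | zero =>
          rw [vnat_zero hV] at hx
          simp only [Submodule.mem_bot] at hx
          rw [hx, mulVec_zero]
          rw [vnat_zero hV]
          exact Submodule.zero_mem _
        | succ j => exact ht'.2 j x hx
      have := ih h1 ha htx
      have e : j - 1 - d = j - (d + 1) := by omega
      rw [e] at this
      exact this

lemma NN_prodEq (hn : 0 < n) (hk : 1 ≤ k) (hV : IsFlag n k V) :
    ProdEq (On n) (NN n k V) k := by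
  rw [prodEq_iff_pS hk]
  intro m hm
  have hmQ : m ∈ Qset n := NN_subset_Qset (pS_subset_of_isSubsg (NN_isSubsg hV) hk hm)
  refine eq_On_of_kills_Vsub hn hmQ (fun x hx => ?_)
  have hx' : x ∈ vnat k V k := by rw [vnat_top hV le_rfl]; exact hx
  have := NN_pS_maps hV hk hm hx'
  rw [Nat.sub_self, vnat_zero hV] at this
  simpa using this

lemma NN_nilLe (hn : 0 < n) (hk : 1 ≤ k) (hV : IsFlag n k V) :
    NilLe (On n) (Qset n) k (NN n k V) := by
  refine ⟨NN_subset_Qset, ⟨NN_isSubsg hV, k, hk, NN_prodEq hn hk hV⟩, ?_⟩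
  exact Nat.sInf_le ⟨hk, NN_prodEq hn hk hV⟩

end Flag

section Cons

open Matrix

variable {n k : ℕ} {V : Fin (k + 1) → Submodule ℝ (Fin n → ℝ)}

/-- Key construction: an element of `NN V` sending a prescribed `x ∈ V_{i+1} \ V_i`
to a prescribed `w ∈ V_i`. -/
lemma exists_cons (hn : 0 < n) (hV : IsFlag n k V) {i : ℕ} (hik : i < k)
    {x w : Fin n → ℝ} (hx1 : x ∈ vnat k V (i+1)) (hx2 : x ∉ vnat k V i)
    (hw : w ∈ vnat k V i) : ∃ A ∈ NN n k V, A.mulVec x = w := by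
  classical
  have hn' : (n:ℝ) ≠ 0 := Nat.cast_ne_zero.2 hn.ne'
  set o : Fin n → ℝ := fun _ => (1:ℝ) with ho
  set U : Submodule ℝ (Fin n → ℝ) := vnat k V i ⊔ (Submodule.span ℝ {o}) with hU
  have hxV : x ∈ Vsub n := vnat_le_Vsub hV _ hx1
  have hwV : w ∈ Vsub n := vnat_le_Vsub hV _ hw
  have hxU : x ∉ U := by
    intro hmem
    obtain ⟨y, hy, z, hz, hyz⟩ := Submodule.mem_sup.1 hmem
    obtain ⟨c, rfl⟩ := Submodule.mem_span_singleton.1 hz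
    have hyV : y ∈ Vsub n := vnat_le_Vsub hV _ hy
    have h4 : ∑ p, x p = (∑ p, y p) + c * (n:ℝ) := by
      rw [← hyz]
      simp only [Pi.add_apply, Pi.smul_apply, smul_eq_mul, ho, mul_one,
        Finset.sum_add_distrib, Finset.sum_const, Finset.card_univ, Fintype.card_fin,
        nsmul_eq_mul]
      ring
    have h3 : c * (n:ℝ) = 0 := by
      rw [mem_Vsub.1 hyV, zero_add] at h4
      rw [← h4, mem_Vsub.1 hxV]
    have hc : c = 0 := by
      rcases mul_eq_zero.1 h3 with h | h
      · exact h
      · exact absurd h hn'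
    apply hx2
    have : x = y := by rw [← hyz, hc]; simp
    rw [this]; exact hy
  obtain ⟨f, hfx, hfU⟩ := U.exists_dual_map_eq_bot_of_notMem hxU inferInstance
  have hf0 : ∀ y ∈ U, f y = 0 := by
    intro y hy
    have h1 : f y ∈ U.map f := Submodule.mem_map_of_mem hy
    rw [hfU] at h1
    simpa using h1
  set φ : Module.Dual ℝ (Fin n → ℝ) := (f x)⁻¹ • f with hφ
  have hφx : φ x = 1 := by simp [hφ, inv_mul_cancel₀ hfx]
  have hφ0 : ∀ y ∈ U, φ y = 0 := by
    intro y hy; simp [hφ, hf0 y hy]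
  have hφo : φ o = 0 :=
    hφ0 o (Submodule.mem_sup_right (Submodule.mem_span_singleton_self o))
  have hosum : (∑ q, Pi.single q (1:ℝ)) = o := by
    ext j
    simp [Pi.single_apply, ho]
  have hφsum : ∀ y : Fin n → ℝ, φ y = ∑ q, y q * φ (Pi.single q 1) := by
    intro y
    have hrep : (∑ q, y q • (Pi.single q (1:ℝ) : Fin n → ℝ)) = y := by
      ext j
      simp [Pi.single_apply, Finset.sum_ite_eq']
    conv_lhs => rw [← hrep]
    rw [map_sum]
    simp [smul_eq_mul]
  set A : Matrix (Fin n) (Fin n) ℝ :=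
    On n + Matrix.of (fun p q => w p * φ (Pi.single q 1)) with hA
  have hmul : ∀ y, A.mulVec y = (On n).mulVec y + (φ y) • w := by
    intro y; ext p
    rw [hA, add_mulVec]
    simp only [Pi.add_apply]
    congr 1
    simp only [mulVec, dotProduct, Matrix.of_apply, Pi.smul_apply, smul_eq_mul]
    rw [hφsum y, Finset.sum_mul]
    apply Finset.sum_congr rfl
    intro q _
    ring
  have hAQ : A ∈ Qset n := by
    constructor
    · intro p
      rw [hA]
      simp only [Matrix.add_apply, Matrix.of_apply, On]
      rw [Finset.sum_add_distrib]
      have h1 : ∑ _q : Fin n, (n:ℝ)⁻¹ = 1 := by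
        simp [Finset.sum_const, mul_inv_cancel₀ hn']
      have h2 : ∑ q, w p * φ (Pi.single q 1) = w p * φ o := by
        rw [← Finset.mul_sum]
        congr 1
        rw [← map_sum]
        congr 1
      rw [h1, h2, hφo, mul_zero, add_zero]
    · intro q
      rw [hA]
      simp only [Matrix.add_apply, Matrix.of_apply, On]
      rw [Finset.sum_add_distrib]
      have h1 : ∑ _p : Fin n, (n:ℝ)⁻¹ = 1 := by
        simp [Finset.sum_const, mul_inv_cancel₀ hn']
      have h2 : ∑ p, w p * φ (Pi.single q 1) = 0 := by
        rw [← Finset.sum_mul, mem_Vsub.1 hwV, zero_mul]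
      rw [h1, h2, add_zero]
  have key : ∀ y ∈ Vsub n, A.mulVec y = (φ y) • w := by
    intro y hy
    rw [hmul y, On_mulVec_vsub hy, zero_add]
  refine ⟨A, ?_, ?_⟩
  · rw [mem_NN_iff hV]
    refine ⟨hAQ, fun j y hy => ?_⟩
    have hyV : y ∈ Vsub n := vnat_le_Vsub hV _ hy
    rw [key y hyV]
    by_cases hji : j + 1 ≤ i
    · have hyU : y ∈ U := Submodule.mem_sup_left (vnat_mono hV hji hy)
      rw [hφ0 y hyU, zero_smul]
      exact Submodule.zero_mem _
    · have hij : i ≤ j := by omega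
      exact Submodule.smul_mem _ _ (vnat_mono hV hij hw)
  · rw [key x hxV, hφx, one_smul]

end Cons

section Recovery

open Matrix

variable {n k : ℕ} {V : Fin (k + 1) → Submodule ℝ (Fin n → ℝ)}

lemma exists_prod_ne_zero (hn : 0 < n) (hV : IsFlag n k V) {j : ℕ}
    (hj1 : 1 ≤ j) {x : Fin n → ℝ} (hxV : x ∈ Vsub n) (hxj : x ∉ vnat k V j) :
    ∃ P ∈ pS (NN n k V) j, P.mulVec x ≠ 0 := by
  set m := sInf {i | x ∈ vnat k V i} with hm
  have hne : k ∈ {i | x ∈ vnat k V i} := by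
    rw [Set.mem_setOf_eq, vnat_top hV le_rfl]; exact hxV
  have hmk : m ≤ k := Nat.sInf_le hne
  have hxm : x ∈ vnat k V m := Nat.sInf_mem ⟨k, hne⟩
  have hlt : ∀ i < m, x ∉ vnat k V i := fun i hi => Nat.notMem_of_lt_sInf hi
  have hmj : j + 1 ≤ m := by
    by_contra h
    push_neg at h
    exact hxj (vnat_mono hV (by omega) hxm)
  have main : ∀ t, 1 ≤ t → t ≤ j → ∃ P ∈ pS (NN n k V) t,
      P.mulVec x ∈ vnat k V (m - t) ∧ P.mulVec x ∉ vnat k V (m - t - 1) := by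
    intro t
    induction t with
    | zero => omega
    | succ t ih =>
      intro h1 h2
      rcases Nat.eq_zero_or_pos t with h0 | h0
      · subst h0
        obtain ⟨w, hw1, hw2⟩ := SetLike.exists_of_lt
          (vnat_lt hV (show m-2 < m-1 by omega) (by omega))
        obtain ⟨A, hA, hAx⟩ := exists_cons hn hV (show m-1 < k by omega)
            (show x ∈ vnat k V (m-1+1) by rw [show m-1+1 = m by omega]; exact hxm)
            (hlt _ (by omega)) hw1
        refine ⟨A, hA, ?_⟩
        rw [hAx]
        rw [show m - 1 - 1 = m - 2 by omega]
        exact ⟨hw1, hw2⟩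
      · obtain ⟨P, hP, hy1, hy2⟩ := ih h0 (by omega)
        obtain ⟨w, hw1, hw2⟩ := SetLike.exists_of_lt
          (vnat_lt hV (show m-t-2 < m-t-1 by omega) (by omega))
        obtain ⟨A, hA, hAy⟩ := exists_cons hn hV (show m-t-1 < k by omega)
            (show P.mulVec x ∈ vnat k V (m-t-1+1) by
              rw [show m-t-1+1 = m-t by omega]; exact hy1)
            hy2 hw1
        refine ⟨A * P, ?_, ?_⟩
        · have := pS_mul le_rfl h0 (show A ∈ pS (NN n k V) 1 from hA) hP
          rwa [show 1 + t = t + 1 by omega] at this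
        · rw [← mulVec_mulVec, hAy]
          rw [show m - (t+1) = m-t-1 by omega, show m - t - 1 - 1 = m-t-2 by omega]
          exact ⟨hw1, hw2⟩
  obtain ⟨P, hP, h1, h2⟩ := main j hj1 le_rfl
  exact ⟨P, hP, fun h0 => h2 (by rw [h0]; exact Submodule.zero_mem _)⟩

lemma Kc_NN_eq (hn : 0 < n) (hV : IsFlag n k V) {j : ℕ} (hj1 : 1 ≤ j)
    (hjk : j ≤ k) : Kc n (NN n k V) j = vnat k V j := by
  cases j with
  | zero => omega
  | succ j =>
    apply le_antisymm
    · intro x hx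
      by_contra hxj
      obtain ⟨P, hP, hP0⟩ := exists_prod_ne_zero hn hV hj1 (Kc_le_Vsub _ hx) hxj
      exact hP0 (hx.2 P hP)
    · intro x hx
      refine ⟨vnat_le_Vsub hV _ hx, fun P hP => ?_⟩
      have := NN_pS_maps hV (by omega) hP hx
      rw [Nat.sub_self, vnat_zero hV] at this
      simpa using this

lemma exists_prod_hit (hn : 0 < n) (hV : IsFlag n k V) {j d : ℕ} (hd : 1 ≤ d)
    (hdk : j + d = k) {v : Fin n → ℝ} (hv : v ∈ vnat k V j) :
    ∃ P ∈ pS (NN n k V) d, ∃ x ∈ Vsub n, P.mulVec x = v := by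
  induction d generalizing j v with
  | zero => omega
  | succ d ih =>
    obtain ⟨y, hy1, hy2⟩ := SetLike.exists_of_lt
      (vnat_lt hV (show j < j+1 by omega) (by omega))
    obtain ⟨A, hA, hAy⟩ := exists_cons hn hV (show j < k by omega) hy1 hy2 hv
    rcases Nat.eq_zero_or_pos d with h0 | h0
    · subst h0
      exact ⟨A, hA, y, vnat_le_Vsub hV _ hy1, hAy⟩
    · obtain ⟨Q, hQ, x, hxV, hQx⟩ := ih h0 (show (j+1) + d = k by omega) hy1
      refine ⟨A * Q, ?_, x, hxV, ?_⟩
      · have := pS_mul le_rfl h0 (show A ∈ pS (NN n k V) 1 from hA) hQ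
        rwa [show 1 + d = d + 1 by omega] at this
      · rw [← mulVec_mulVec, hQx, hAy]

end Recovery

section Containment

open Matrix Module

variable {n k : ℕ} {T : Set (Matrix (Fin n) (Fin n) ℝ)}

lemma prodEq_pad (hTQ : T ⊆ Qset n) (hsub : IsSubsg T) {k' kk : ℕ} (h1 : 1 ≤ k')
    (h : ProdEq (On n) T k') (hkk : k' ≤ kk) : ProdEq (On n) T kk := by
  rw [prodEq_iff_pS h1] at h
  rw [prodEq_iff_pS (le_trans h1 hkk)]
  intro m hm
  rcases Nat.eq_or_lt_of_le hkk with he | hlt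
  · exact h m (by rw [he]; exact hm)
  · have hm' : m ∈ pS T ((kk - k') + k') := by
      rwa [Nat.sub_add_cancel hkk]
    obtain ⟨a, ha, b, hb, rfl⟩ := pS_split (by omega) h1 hm'
    rw [h b hb]
    exact qset_mul_On (hTQ (pS_subset_of_isSubsg hsub (by omega) ha))

lemma nilLe_prodEq (hk : 1 ≤ k) (hT : NilLe (On n) (Qset n) k T) : ProdEq (On n) T k := by
  obtain ⟨hTQ, ⟨hsub, k0, hk0, hPE⟩, hcls⟩ := hT
  have hne : {m | 0 < m ∧ ProdEq (On n) T m}.Nonempty := ⟨k0, hk0, hPE⟩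
  have hmem := Nat.sInf_mem hne
  exact prodEq_pad hTQ hsub hmem.1 hmem.2 (le_trans (le_refl _) hcls)

/-- The sum-of-coordinates functional. -/
noncomputable def sumF (n : ℕ) : (Fin n → ℝ) →ₗ[ℝ] ℝ where
  toFun x := ∑ i, x i
  map_add' := by intros; simp [Finset.sum_add_distrib]
  map_smul' := by intros; simp [Finset.mul_sum]

lemma Vsub_eq_ker : Vsub n = LinearMap.ker (sumF n) := by
  ext x
  rw [mem_Vsub, LinearMap.mem_ker]
  rfl

lemma finrank_Vsub (hn : 0 < n) : finrank ℝ (Vsub n) = n - 1 := by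
  have hrange : LinearMap.range (sumF n) = ⊤ := by
    rw [LinearMap.range_eq_top]
    intro r
    refine ⟨fun _ => r / n, ?_⟩
    show ∑ _i : Fin n, r / (n:ℝ) = r
    rw [Finset.sum_const, Finset.card_univ, Fintype.card_fin, nsmul_eq_mul]
    field_simp
  have h := LinearMap.finrank_range_add_finrank_ker (sumF n)
  rw [hrange, finrank_top, Module.finrank_self, Module.finrank_pi, Fintype.card_fin] at h
  rw [Vsub_eq_ker]
  omega

lemma Vsub_ne_bot (hn : 2 ≤ n) : Vsub n ≠ ⊥ := by
  intro h
  have h2 := finrank_Vsub (by omega : 0 < n)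
  rw [h, finrank_bot] at h2
  omega

/-- A `T`-admissible chain of submodules, strictly increasing up to step `s`. -/
structure GoodChain (n : ℕ) (T : Set (Matrix (Fin n) (Fin n) ℝ))
    (c : ℕ → Submodule ℝ (Fin n → ℝ)) (s : ℕ) : Prop where
  bot : c 0 = ⊥
  top : ∀ i, s ≤ i → c i = Vsub n
  strict : ∀ i < s, c i < c (i+1)
  maps : ∀ i, ∀ A ∈ T, ∀ x ∈ c (i+1), A.mulVec x ∈ c i

lemma chain_lt {c : ℕ → Submodule ℝ (Fin n → ℝ)} {s : ℕ}
    (hstrict : ∀ i < s, c i < c (i+1)) : ∀ a b, a < b → b ≤ s → c a < c b := by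
  intro a b
  induction b with
  | zero => omega
  | succ b ih =>
    intro hab hb
    rcases Nat.eq_or_lt_of_le (Nat.lt_succ_iff.1 hab) with he | hlt
    · rw [he]; exact hstrict b (by omega)
    · exact lt_trans (ih hlt (by omega)) (hstrict b (by omega))

lemma chain_le_Vsub {c : ℕ → Submodule ℝ (Fin n → ℝ)} {s : ℕ}
    (hc : GoodChain n T c s) (i : ℕ) : c i ≤ Vsub n := by
  rcases lt_or_ge i s with h | h
  · rw [← hc.top s le_rfl]
    exact le_of_lt (chain_lt hc.strict i s h le_rfl)
  · rw [hc.top i h]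

lemma gap_exists {c : ℕ → Submodule ℝ (Fin n → ℝ)} {s : ℕ}
    (hc : GoodChain n T c s) (hsk : s < k) (hk : k ≤ finrank ℝ (Vsub n)) :
    ∃ i < s, finrank ℝ (c i) + 1 < finrank ℝ (c (i+1)) := by
  by_contra hcon
  push_neg at hcon
  have hb : ∀ i ≤ s, finrank ℝ (c i) ≤ i := by
    intro i
    induction i with
    | zero => intro _; rw [hc.bot, finrank_bot]
    | succ i ih =>
      intro hi
      have := hcon i (by omega)
      have := ih (by omega)
      omega
  have h1 := hb s le_rfl
  rw [hc.top s le_rfl] at h1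
  omega

lemma insert_step {c : ℕ → Submodule ℝ (Fin n → ℝ)} {s : ℕ}
    (hc : GoodChain n T c s) (hsk : s < k) (hk : k ≤ finrank ℝ (Vsub n)) :
    ∃ c', GoodChain n T c' (s+1) := by
  obtain ⟨i, his, hgap⟩ := gap_exists hc hsk hk
  have hlt : c i < c (i+1) := hc.strict i his
  obtain ⟨v, hv1, hv2⟩ := SetLike.exists_of_lt hlt
  have hvne : v ≠ 0 := fun h => hv2 (h ▸ Submodule.zero_mem _)
  set X : Submodule ℝ (Fin n → ℝ) := c i ⊔ (ℝ ∙ v) with hX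
  have hciX : c i < X := by
    refine lt_of_le_of_ne le_sup_left (fun h => hv2 ?_)
    rw [h]
    exact Submodule.mem_sup_right (Submodule.mem_span_singleton_self v)
  have hXle : X ≤ c (i+1) :=
    sup_le (le_of_lt hlt) ((Submodule.span_singleton_le_iff_mem v _).2 hv1)
  have hXlt : X < c (i+1) := by
    refine lt_of_le_of_ne hXle (fun h => ?_)
    have h1 : finrank ℝ X ≤ finrank ℝ (c i) + 1 := by
      refine le_trans (Submodule.finrank_add_le_finrank_add_finrank (c i) (ℝ ∙ v)) ?_
      rw [finrank_span_singleton hvne]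
    rw [h] at h1
    omega
  refine ⟨fun j => if j ≤ i then c j else if j = i+1 then X else c (j-1), ?_⟩
  constructor
  · simp [hc.bot]
  · intro j hj
    have h1 : ¬ j ≤ i := by omega
    have h2 : ¬ j = i + 1 := by omega
    simp only [if_neg h1, if_neg h2]
    exact hc.top (j-1) (by omega)
  · intro j hj
    rcases lt_trichotomy j i with h | h | h
    · simp only [if_pos (by omega : j ≤ i), if_pos (by omega : j + 1 ≤ i)]
      exact hc.strict j (by omega)
    · subst h
      simp only [if_pos le_rfl, if_neg (by omega : ¬ j + 1 ≤ j), if_pos rfl]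
      exact hciX
    · rcases Nat.eq_or_lt_of_le h with he | hlt2
      · simp only [if_neg (by omega : ¬ j ≤ i), if_neg (by omega : ¬ j + 1 ≤ i)]
        rw [if_pos (by omega : j = i + 1), if_neg (by omega : ¬ j + 1 = i + 1)]
        have : j + 1 - 1 = i + 1 := by omega
        rw [this]
        exact hXlt
      · simp only [if_neg (by omega : ¬ j ≤ i), if_neg (by omega : ¬ j + 1 ≤ i),
          if_neg (by omega : ¬ j = i + 1), if_neg (by omega : ¬ j + 1 = i + 1)]
        have e : j + 1 - 1 = (j - 1) + 1 := by omega
        rw [e]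
        exact hc.strict (j-1) (by omega)
  · intro j A hA x hx
    rcases lt_trichotomy j i with h | h | h
    · rw [if_pos (by omega : j + 1 ≤ i)] at hx
      rw [if_pos (by omega : j ≤ i)]
      exact hc.maps j A hA x hx
    · subst h
      rw [if_neg (by omega : ¬ j + 1 ≤ j), if_pos rfl] at hx
      rw [if_pos le_rfl]
      exact hc.maps j A hA x (hXle hx)
    · rcases Nat.eq_or_lt_of_le h with he | hlt2
      · rw [if_neg (by omega : ¬ j + 1 ≤ i), if_neg (by omega : ¬ j + 1 = i + 1)] at hx
        rw [if_neg (by omega : ¬ j ≤ i), if_pos (by omega : j = i + 1)]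
        have e : j + 1 - 1 = i + 1 := by omega
        rw [e] at hx
        exact le_of_lt hciX (hc.maps i A hA x hx)
      · rw [if_neg (by omega : ¬ j + 1 ≤ i), if_neg (by omega : ¬ j + 1 = i + 1)] at hx
        rw [if_neg (by omega : ¬ j ≤ i), if_neg (by omega : ¬ j = i + 1)]
        have e : j + 1 - 1 = (j - 1) + 1 := by omega
        rw [e] at hx
        exact hc.maps (j-1) A hA x hx

lemma chain_refine (hk : k ≤ finrank ℝ (Vsub n)) :
    ∀ d (c : ℕ → Submodule ℝ (Fin n → ℝ)) s, GoodChain n T c s → s + d = k →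
      ∃ c', GoodChain n T c' k := by
  intro d
  induction d with
  | zero =>
    intro c s hc hs
    exact ⟨c, by rwa [← Nat.add_zero s, hs] at hc⟩
  | succ d ih =>
    intro c s hc hs
    obtain ⟨c', hc'⟩ := insert_step hc (by omega) hk
    exact ih c' (s+1) hc' (by omega)

lemma Kc_goodChain (hn : 0 < n) (hk : 1 ≤ k) (hTQ : T ⊆ Qset n)
    (hPE : ProdEq (On n) T k) :
    ∃ s ≤ k, GoodChain n T (Kc n T) s := by
  have htopk : Kc n T k = Vsub n := Kc_top hk hPE
  set s := sInf {j | Kc n T j = Vsub n} with hs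
  have hne : k ∈ {j | Kc n T j = Vsub n} := htopk
  have hsk : s ≤ k := Nat.sInf_le hne
  have hss : Kc n T s = Vsub n := Nat.sInf_mem ⟨k, hne⟩
  refine ⟨s, hsk, ?_, ?_, ?_, ?_⟩
  · rfl
  · intro i hi
    refine le_antisymm (Kc_le_Vsub i) ?_
    rw [← hss]
    exact Kc_mono hi
  · intro i hi
    refine lt_of_le_of_ne (Kc_mono_step i) (fun he => ?_)
    have h2 := (Kc_stab' hTQ he (k - i)).1
    rw [show i + (k - i) = k by omega] at h2
    have h3 : Kc n T i = Vsub n := by rw [← h2, htopk]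
    have : s ≤ i := Nat.sInf_le h3
    omega
  · intro i A hA x hx
    exact Kc_maps hTQ hA hx

/-- Every nilpotent subsemigroup of class at most `k` is contained in `NN V`
for some flag `V` of length `k`. -/
lemma subset_NN (hn : 2 ≤ n) (hk : 1 ≤ k) (hkn : k ≤ n - 1)
    (hT : NilLe (On n) (Qset n) k T) :
    ∃ V : Fin (k+1) → Submodule ℝ (Fin n → ℝ), IsFlag n k V ∧ T ⊆ NN n k V := by
  have hn0 : 0 < n := by omega
  have hTQ := hT.1
  have hPE := nilLe_prodEq hk hT
  obtain ⟨s, hsk, hgood⟩ := Kc_goodChain hn0 hk hTQ hPE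
  have hkfr : k ≤ finrank ℝ (Vsub n) := by rw [finrank_Vsub hn0]; omega
  obtain ⟨c, hc⟩ := chain_refine hkfr (k - s) (Kc n T) s hgood (by omega)
  refine ⟨fun i => c i.val, ⟨?_, ?_, ?_⟩, ?_⟩
  · exact hc.bot
  · exact hc.top k le_rfl
  · intro a b hab
    exact chain_lt hc.strict a.val b.val hab (by omega)
  · intro A hA
    refine ⟨hTQ hA, fun i x hx => ?_⟩
    exact hc.maps i.val A hA x hx

end Containment

section Final

open Matrix Module

variable {n k : ℕ} {T : Set (Matrix (Fin n) (Fin n) ℝ)}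
variable {V V' : Fin (k + 1) → Submodule ℝ (Fin n → ℝ)}

lemma image_mem_Kc (hTQ : T ⊆ Qset n) (hsub : IsSubsg T) (hPE : ProdEq (On n) T k)
    {j d : ℕ} (hjd : j + d = k) (hj : 1 ≤ j) (hd : 1 ≤ d)
    {P : Matrix (Fin n) (Fin n) ℝ} (hP : P ∈ pS T d) {x : Fin n → ℝ} (hx : x ∈ Vsub n) :
    P.mulVec x ∈ Kc n T j := by
  cases j with
  | zero => omega
  | succ j =>
    refine ⟨qset_mulVec_vsub (hTQ (pS_subset_of_isSubsg hsub hd hP)) hx, fun Q hQ => ?_⟩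
    rw [mulVec_mulVec]
    have h1 : Q * P ∈ pS T ((j+1) + d) := pS_mul (by omega) hd hQ hP
    rw [hjd] at h1
    have h2 : Q * P = On n := (prodEq_iff_pS (by omega : 1 ≤ k)).1 hPE _ h1
    rw [h2, On_mulVec_vsub hx]

lemma NN_maximal (hn : 2 ≤ n) (hk1 : 1 ≤ k) (hkn : k ≤ n - 1) (hV : IsFlag n k V) :
    Maximal (NilLe (On n) (Qset n) k) (NN n k V) := by
  have hn0 : 0 < n := by omega
  refine ⟨NN_nilLe hn0 hk1 hV, ?_⟩
  intro T' hT' hle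
  have hT'Q : T' ⊆ Qset n := hT'.1
  have hsub : IsSubsg T' := hT'.2.1.1
  have hPE : ProdEq (On n) T' k := nilLe_prodEq hk1 hT'
  have hupper : ∀ j, 1 ≤ j → j ≤ k → Kc n T' j ≤ vnat k V j := by
    intro j h1 h2
    refine le_trans (Kc_antitone hle j) ?_
    rw [Kc_NN_eq hn0 hV h1 h2]
  have hlower : ∀ j, j ≤ k → vnat k V j ≤ Kc n T' j := by
    intro j hj
    rcases Nat.eq_zero_or_pos j with h0 | h1
    · rw [h0, vnat_zero hV]; exact bot_le
    rcases Nat.eq_or_lt_of_le hj with he | hjk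
    · rw [he, vnat_top hV le_rfl, Kc_top hk1 hPE]
    · intro v hv
      obtain ⟨P, hP, x, hx, hPx⟩ := exists_prod_hit hn0 hV (show 1 ≤ k - j by omega)
        (show j + (k-j) = k by omega) hv
      have hP' : P ∈ pS T' (k-j) := pS_mono hle _ hP
      rw [← hPx]
      exact image_mem_Kc hT'Q hsub hPE (show j + (k-j) = k by omega) h1 (by omega) hP' hx
  intro A hA
  rw [mem_NN_iff hV]
  refine ⟨hT'Q hA, fun j x hx => ?_⟩
  rcases lt_or_ge j k with hjk | hjk
  · have hx' : x ∈ Kc n T' (j+1) := hlower (j+1) (by omega) hx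
    have hAx := Kc_maps hT'Q hA hx'
    cases j with
    | zero =>
      have hAx0 : A.mulVec x = 0 := by
        have h0 : A.mulVec x ∈ (⊥ : Submodule ℝ (Fin n → ℝ)) := hAx
        simpa using h0
      rw [hAx0]
      exact Submodule.zero_mem _
    | succ j => exact hupper (j+1) (by omega) (by omega) hAx
  · rw [vnat_top hV (by omega)] at hx
    rw [vnat_top hV (by omega)]
    exact qset_mulVec_vsub (hT'Q hA) hx

lemma NN_inj (hn0 : 0 < n) (hV : IsFlag n k V) (hV' : IsFlag n k V')
    (h : NN n k V = NN n k V') : V = V' := by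
  funext i
  have h1 : vnat k V i.val = vnat k V' i.val := by
    rcases Nat.eq_zero_or_pos i.val with h0 | h1
    · rw [h0, vnat_zero hV, vnat_zero hV']
    · rw [← Kc_NN_eq hn0 hV h1 (by omega), ← Kc_NN_eq hn0 hV' h1 (by omega), h]
  rw [vnat_of_le (by omega : i.val ≤ k), vnat_of_le (by omega : i.val ≤ k)] at h1
  exact h1

end Final

/-- The map sending a flag `0 = V_0 ⊊ V_1 ⊊ ⋯ ⊊ V_k = V` of length
`k` in the hyperplane `V` of sum-zero vectors to
`T = {A ∈ Q_n : A·V_i ⊆ V_{i-1} for all i}` is a bijection from the set of flags of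
length `k` in `V` onto the set of maximal elements of `Nil_k(Q_n)`. -/
theorem stmt13 (n k : ℕ) (hn : 2 ≤ n) (hk1 : 1 ≤ k) (hkn : k ≤ n - 1) :
    Set.BijOn
      (fun V : Fin (k + 1) → Submodule ℝ (Fin n → ℝ) =>
        {A | A ∈ Qset n ∧ ∀ i : Fin k, ∀ x ∈ V i.succ, A.mulVec x ∈ V i.castSucc})
      {V | V 0 = ⊥ ∧ V (Fin.last k) = Vsub n ∧ StrictMono V}
      {T | Maximal (NilLe (On n) (Qset n) k) T} := by
  have hn0 : 0 < n := by omega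
  refine ⟨?_, ?_, ?_⟩
  · intro V hV
    exact NN_maximal hn hk1 hkn ⟨hV.1, hV.2.1, hV.2.2⟩
  · intro V hV V' hV' he
    exact NN_inj hn0 ⟨hV.1, hV.2.1, hV.2.2⟩ ⟨hV'.1, hV'.2.1, hV'.2.2⟩ he
  · intro Tm hTm
    obtain ⟨Vf, hVf, hsub⟩ := subset_NN hn hk1 hkn hTm.1
    refine ⟨Vf, ⟨hVf.bot, hVf.top, hVf.mono⟩, ?_⟩
    exact le_antisymm (hTm.2 (NN_nilLe hn0 hk1 hVf) hsub) hsub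

end NilSg
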